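/- Let $x_1, x_2, y_1, y_2$ be independent random variables, each uniformly distributed on $[-D/2, D/2]$ with $D > 0$. Then $\Pr\big((x_1 - x_2)^2 + y_2^2 \le y_1^2\big) = \frac{2\pi - 1}{24}$. -/

import Mathlib

open MeasureTheory Set intervalIntegral Real
open scoped ENNReal

lemma int_minmax (D t : ℝ) (hD : 0 < D) (ht : 0 ≤ t) (ht2 : t ≤ D/2) :
    ∫ x in (-(D/2))..(D/2), (min (x+t) (D/2) - max (x-t) (-(D/2))) = 2*D*t - t^2 := by
  have hmin : Continuous fun x : ℝ => min (x+t) (D/2) := (continuous_id.add continuous_const).min continuous_const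
  have hmax : Continuous fun x : ℝ => max (x-t) (-(D/2)) := (continuous_id.sub continuous_const).max continuous_const
  have h1 : ∫ x in (-(D/2))..(D/2), min (x+t) (D/2) = D*t - t^2/2 := by
    rw [← integral_add_adjacent_intervals (b := D/2 - t)
      (hmin.intervalIntegrable _ _) (hmin.intervalIntegrable _ _)]
    have e1 : ∫ x in (-(D/2))..(D/2 - t), min (x+t) (D/2) = ∫ x in (-(D/2))..(D/2 - t), (x + t) := by
      apply integral_congr
      intro x hx
      rw [uIcc_of_le (by linarith)] at hx
      exact min_eq_left (by linarith [hx.2])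
    have e2 : ∫ x in (D/2 - t)..(D/2), min (x+t) (D/2) = ∫ x in (D/2 - t)..(D/2), (D/2 : ℝ) := by
      apply integral_congr
      intro x hx
      rw [uIcc_of_le (by linarith)] at hx
      exact min_eq_right (by linarith [hx.1])
    rw [e1, e2, integral_comp_add_right (fun x => x) t, integral_id,
      intervalIntegral.integral_const]
    simp only [smul_eq_mul]
    ring
  have h2 : ∫ x in (-(D/2))..(D/2), max (x-t) (-(D/2)) = -(D*t) + t^2/2 := by
    rw [← integral_add_adjacent_intervals (b := -(D/2) + t)
      (hmax.intervalIntegrable _ _) (hmax.intervalIntegrable _ _)]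
    have e1 : ∫ x in (-(D/2))..(-(D/2) + t), max (x-t) (-(D/2)) = ∫ x in (-(D/2))..(-(D/2)+t), (-(D/2) : ℝ) := by
      apply integral_congr
      intro x hx
      rw [uIcc_of_le (by linarith)] at hx
      exact max_eq_right (by linarith [hx.2])
    have e2 : ∫ x in (-(D/2) + t)..(D/2), max (x-t) (-(D/2)) = ∫ x in (-(D/2)+t)..(D/2), (x - t) := by
      apply integral_congr
      intro x hx
      rw [uIcc_of_le (by linarith)] at hx
      exact max_eq_left (by linarith [hx.1])
    have e3 : ∫ x in (-(D/2) + t)..(D/2), (x - t) = ∫ x in (-(D/2) + t - t)..(D/2 - t), (x : ℝ) :=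
      integral_comp_sub_right (fun x => x) t
    rw [e1, e2, e3, integral_id, intervalIntegral.integral_const]
    simp only [smul_eq_mul]
    ring
  rw [integral_sub (hmin.intervalIntegrable _ _) (hmax.intervalIntegrable _ _), h1, h2]
  ring

lemma int_sqrt (r : ℝ) (hr : 0 ≤ r) :
    ∫ y in (-r)..r, Real.sqrt (r^2 - y^2) = Real.pi/2 * r^2 := by
  rcases eq_or_lt_of_le hr with rfl | hr
  · simp
  · have key := integral_comp_mul_left (a := -1) (b := 1)
      (f := fun y => Real.sqrt (r^2 - y^2)) (c := r) hr.ne'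
    have lhs : ∫ x in (-1 : ℝ)..1, Real.sqrt (r^2 - (r*x)^2) = r * (Real.pi/2) := by
      have h : ∀ x : ℝ, Real.sqrt (r^2 - (r*x)^2) = r * Real.sqrt (1 - x^2) := by
        intro x
        rw [show r^2 - (r*x)^2 = r^2 * (1 - x^2) by ring, Real.sqrt_mul (sq_nonneg r),
          Real.sqrt_sq hr.le]
      simp_rw [h]
      rw [intervalIntegral.integral_const_mul, integral_sqrt_one_sub_sq]
    rw [lhs, smul_eq_mul, show r * (-1 : ℝ) = -r by ring, mul_one] at key
    field_simp at key
    linarith [key]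

lemma int_mid (D y1 : ℝ) (hD : 0 < D) (hy : |y1| ≤ D/2) :
    ∫ y2 in (-(D/2))..(D/2),
      (2*D*Real.sqrt (y1^2 - y2^2) - Real.sqrt (y1^2 - y2^2)^2)
      = Real.pi * D * y1^2 - 4/3 * |y1|^3 := by
  set r := |y1| with hr
  have hr0 : 0 ≤ r := abs_nonneg _
  have hcf : Continuous fun y2 : ℝ => 2*D*Real.sqrt (y1^2 - y2^2) - Real.sqrt (y1^2 - y2^2)^2 := by
    have hs : Continuous fun y2 : ℝ => Real.sqrt (y1^2 - y2^2) :=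
      Real.continuous_sqrt.comp (continuous_const.sub (continuous_pow 2))
    exact (continuous_const.mul hs).sub (hs.pow 2)
  have hzero : ∀ y2 : ℝ, r ≤ |y2| →
      2*D*Real.sqrt (y1^2 - y2^2) - Real.sqrt (y1^2 - y2^2)^2 = 0 := by
    intro y2 h
    have h2 : y1^2 - y2^2 ≤ 0 := by
      have := pow_le_pow_left₀ hr0 h 2
      rw [sq_abs, sq_abs] at this
      linarith
    rw [Real.sqrt_eq_zero'.mpr h2]
    ring
  rw [← integral_add_adjacent_intervals (a := -(D/2)) (b := -r) (c := D/2)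
    (hcf.intervalIntegrable _ _) (hcf.intervalIntegrable _ _),
    ← integral_add_adjacent_intervals (a := -r) (b := r) (c := D/2)
    (hcf.intervalIntegrable _ _) (hcf.intervalIntegrable _ _)]
  have e1 : ∫ y2 in (-(D/2))..(-r), (2*D*Real.sqrt (y1^2 - y2^2) - Real.sqrt (y1^2 - y2^2)^2) = 0 := by
    rw [show (0:ℝ) = ∫ y2 in (-(D/2))..(-r), (0:ℝ) by simp]
    apply integral_congr
    intro x hx
    rw [uIcc_of_le (by linarith)] at hx
    exact hzero x (by rw [le_abs]; right; linarith [hx.2])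
  have e3 : ∫ y2 in (r)..(D/2), (2*D*Real.sqrt (y1^2 - y2^2) - Real.sqrt (y1^2 - y2^2)^2) = 0 := by
    rw [show (0:ℝ) = ∫ y2 in (r)..(D/2), (0:ℝ) by simp]
    apply integral_congr
    intro x hx
    rw [uIcc_of_le (by linarith)] at hx
    refine hzero x ?_
    rw [le_abs]; left; exact hx.1
  have e2 : ∫ y2 in (-r)..r, (2*D*Real.sqrt (y1^2 - y2^2) - Real.sqrt (y1^2 - y2^2)^2)
      = Real.pi * D * y1^2 - 4/3 * r^3 := by
    have congr2 : ∫ y2 in (-r)..r, (2*D*Real.sqrt (y1^2 - y2^2) - Real.sqrt (y1^2 - y2^2)^2)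
        = ∫ y2 in (-r)..r, (2*D*Real.sqrt (r^2 - y2^2) - (r^2 - y2^2)) := by
      apply integral_congr
      intro x hx
      rw [uIcc_of_le (by linarith)] at hx
      have hb : 0 ≤ y1^2 - x^2 := by
        have h1 : |x| ≤ r := abs_le.mpr ⟨hx.1, hx.2⟩
        have h2 := pow_le_pow_left₀ (abs_nonneg x) h1 2
        rw [sq_abs, sq_abs] at h2
        linarith
      have hyr : y1^2 = r^2 := by rw [hr, sq_abs]
      simp only
      rw [hyr] at hb ⊢
      rw [Real.sq_sqrt hb]
    rw [congr2]
    have hi1 : IntervalIntegrable (fun y2 : ℝ => 2*D*Real.sqrt (r^2 - y2^2)) volume (-r) r := by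
      exact (continuous_const.mul (Real.continuous_sqrt.comp
        (continuous_const.sub (continuous_pow 2)))).intervalIntegrable _ _
    have hi2 : IntervalIntegrable (fun y2 : ℝ => r^2 - y2^2) volume (-r) r := by
      exact (continuous_const.sub (continuous_pow 2)).intervalIntegrable _ _
    rw [integral_sub hi1 hi2, intervalIntegral.integral_const_mul, int_sqrt r hr0,
      integral_sub (intervalIntegrable_const) ((continuous_pow 2).intervalIntegrable _ _),
      intervalIntegral.integral_const, integral_pow]
    have hyr : y1^2 = r^2 := by rw [hr, sq_abs]
    rw [hyr]
    simp only [smul_eq_mul]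
    push_cast
    ring
  rw [e1, e2, e3]
  ring

lemma int_out (D : ℝ) (hD : 0 < D) :
    ∫ y in (-(D/2))..(D/2), (Real.pi * D * y^2 - 4/3 * |y|^3)
      = D^4 * (2*Real.pi - 1)/24 := by
  have hcf : Continuous fun y : ℝ => Real.pi * D * y^2 - 4/3 * |y|^3 := by
    exact (continuous_const.mul (continuous_pow 2)).sub
      (continuous_const.mul ((continuous_abs).pow 3))
  rw [← integral_add_adjacent_intervals (a := -(D/2)) (b := 0) (c := D/2)
    (hcf.intervalIntegrable _ _) (hcf.intervalIntegrable _ _)]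
  have e1 : ∫ y in (-(D/2))..(0:ℝ), (Real.pi * D * y^2 - 4/3 * |y|^3)
      = ∫ y in (-(D/2))..(0:ℝ), (Real.pi * D * y^2 + 4/3 * y^3) := by
    apply integral_congr
    intro x hx
    rw [uIcc_of_le (by linarith)] at hx
    simp only
    rw [abs_of_nonpos hx.2]
    ring
  have e2 : ∫ y in (0:ℝ)..(D/2), (Real.pi * D * y^2 - 4/3 * |y|^3)
      = ∫ y in (0:ℝ)..(D/2), (Real.pi * D * y^2 - 4/3 * y^3) := by
    apply integral_congr
    intro x hx
    rw [uIcc_of_le (by linarith)] at hx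
    simp only
    rw [abs_of_nonneg hx.1]
  rw [e1, e2]
  have i1 : ∀ a b : ℝ, ∫ y in a..b, (Real.pi * D * y^2 + 4/3 * y^3)
      = Real.pi * D * ((b^3 - a^3)/3) + 4/3 * ((b^4 - a^4)/4) := by
    intro a b
    rw [integral_add ((by fun_prop : Continuous fun y : ℝ => Real.pi * D * y^2).intervalIntegrable _ _)
      ((by fun_prop : Continuous fun y : ℝ => 4/3 * y^3).intervalIntegrable _ _),
      intervalIntegral.integral_const_mul, intervalIntegral.integral_const_mul, integral_pow, integral_pow]
    push_cast; ring
  have i2 : ∀ a b : ℝ, ∫ y in a..b, (Real.pi * D * y^2 - 4/3 * y^3)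
      = Real.pi * D * ((b^3 - a^3)/3) - 4/3 * ((b^4 - a^4)/4) := by
    intro a b
    rw [integral_sub ((by fun_prop : Continuous fun y : ℝ => Real.pi * D * y^2).intervalIntegrable _ _)
      ((by fun_prop : Continuous fun y : ℝ => 4/3 * y^3).intervalIntegrable _ _),
      intervalIntegral.integral_const_mul, intervalIntegral.integral_const_mul, integral_pow, integral_pow]
    push_cast; ring
  rw [i1, i2]
  ring

noncomputable def unif (D : ℝ) : Measure ℝ :=
  (ENNReal.ofReal D)⁻¹ • (volume.restrict (Set.Icc (-(D/2)) (D/2)))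

instance unif_sfinite (D : ℝ) : SFinite (unif D) := by unfold unif; infer_instance

lemma unif_apply (D : ℝ) {A : Set ℝ} (hA : MeasurableSet A) :
    unif D A = (ENNReal.ofReal D)⁻¹ * volume (A ∩ Icc (-(D/2)) (D/2)) := by
  rw [unif, Measure.smul_apply, Measure.restrict_apply hA, smul_eq_mul]

lemma unif_lintegral (D : ℝ) (f : ℝ → ℝ≥0∞) :
    ∫⁻ x, f x ∂(unif D) = (ENNReal.ofReal D)⁻¹ * ∫⁻ x in Icc (-(D/2)) (D/2), f x := by
  rw [unif, lintegral_smul_measure, smul_eq_mul]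

lemma vol_inner (D x1 y1 y2 : ℝ) (hD : 0 < D) (hx1 : x1 ∈ Icc (-(D/2)) (D/2)) :
    volume ({x2 : ℝ | (x1 - x2)^2 + y2^2 ≤ y1^2} ∩ Icc (-(D/2)) (D/2))
      = ENNReal.ofReal (min (x1 + Real.sqrt (y1^2 - y2^2)) (D/2)
          - max (x1 - Real.sqrt (y1^2 - y2^2)) (-(D/2))) := by
  rcases le_or_gt 0 (y1^2 - y2^2) with hb | hb
  · have hset : {x2 : ℝ | (x1 - x2)^2 + y2^2 ≤ y1^2}
        = Icc (x1 - Real.sqrt (y1^2-y2^2)) (x1 + Real.sqrt (y1^2-y2^2)) := by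
      ext x2
      simp only [mem_setOf_eq, mem_Icc]
      have h1 : (x1-x2)^2 + y2^2 ≤ y1^2 ↔ (x1-x2)^2 ≤ y1^2 - y2^2 := by
        constructor <;> intro <;> linarith
      have h2 := Real.le_sqrt (abs_nonneg (x1-x2)) hb
      rw [sq_abs] at h2
      rw [h1, ← h2, abs_le]
      constructor <;> intro h <;> exact ⟨by linarith [h.1, h.2], by linarith [h.1, h.2]⟩
    rw [hset, Icc_inter_Icc, Real.volume_Icc]
  · have hset : {x2 : ℝ | (x1 - x2)^2 + y2^2 ≤ y1^2} = ∅ := by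
      ext x2
      simp only [mem_setOf_eq, mem_empty_iff_false, iff_false, not_le]
      nlinarith [sq_nonneg (x1-x2)]
    rw [hset, empty_inter, measure_empty, Real.sqrt_eq_zero'.mpr hb.le]
    have h1 : min (x1 + 0) (D/2) = x1 := by rw [add_zero]; exact min_eq_left hx1.2
    have h2 : max (x1 - 0) (-(D/2)) = x1 := by rw [sub_zero]; exact max_eq_left hx1.1
    rw [h1, h2, sub_self, ENNReal.ofReal_zero]

lemma sqrt_le_half (D y1 y2 : ℝ) (hy1 : |y1| ≤ D/2) : Real.sqrt (y1^2 - y2^2) ≤ D/2 := by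
  calc Real.sqrt (y1^2 - y2^2) ≤ Real.sqrt (y1^2) :=
        Real.sqrt_le_sqrt (by nlinarith [sq_nonneg y2])
    _ = |y1| := Real.sqrt_sq_eq_abs y1
    _ ≤ D/2 := hy1

lemma prod2_slice (D : ℝ) (hD : 0 < D) (y1 y2 : ℝ) (hy1 : |y1| ≤ D/2) :
    (unif D).prod (unif D) {q : ℝ × ℝ | (q.1 - q.2)^2 + y2^2 ≤ y1^2}
      = ((ENNReal.ofReal D)⁻¹)^2 *
        ENNReal.ofReal (2*D*Real.sqrt (y1^2-y2^2) - Real.sqrt (y1^2-y2^2)^2) := by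
  set c : ℝ≥0∞ := (ENNReal.ofReal D)⁻¹ with hc
  have hofD0 : ENNReal.ofReal D ≠ 0 := by
    simp only [ne_eq, ENNReal.ofReal_eq_zero, not_le]; linarith
  have hc_ne_top : c ≠ ⊤ := ENNReal.inv_ne_top.mpr hofD0
  set t := Real.sqrt (y1^2 - y2^2) with htdef
  have ht0 : 0 ≤ t := Real.sqrt_nonneg _
  have ht2 : t ≤ D/2 := sqrt_le_half D y1 y2 hy1
  have hSm : MeasurableSet {q : ℝ × ℝ | (q.1 - q.2)^2 + y2^2 ≤ y1^2} :=
    measurableSet_le (by fun_prop) (by fun_prop)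
  rw [Measure.prod_apply hSm]
  have hpre : ∀ x1 : ℝ, (Prod.mk x1 ⁻¹' {q : ℝ × ℝ | (q.1 - q.2)^2 + y2^2 ≤ y1^2})
      = {x2 : ℝ | (x1 - x2)^2 + y2^2 ≤ y1^2} := fun _ => rfl
  simp_rw [hpre]
  rw [unif_lintegral]
  have hcongr : ∫⁻ x1 in Icc (-(D/2)) (D/2), unif D {x2 : ℝ | (x1 - x2)^2 + y2^2 ≤ y1^2}
      = ∫⁻ x1 in Icc (-(D/2)) (D/2),
          c * ENNReal.ofReal (min (x1 + t) (D/2) - max (x1 - t) (-(D/2))) := by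
    apply setLIntegral_congr_fun measurableSet_Icc
    intro x1 hx1
    simp only
    rw [unif_apply D (measurableSet_le (by fun_prop) (by fun_prop)),
      vol_inner D x1 y1 y2 hD hx1]
  rw [hcongr, lintegral_const_mul' _ _ hc_ne_top]
  have hg : ∫⁻ x1 in Icc (-(D/2)) (D/2),
      ENNReal.ofReal (min (x1 + t) (D/2) - max (x1 - t) (-(D/2)))
      = ENNReal.ofReal (2*D*t - t^2) := by
    have hcont : Continuous fun x : ℝ => min (x + t) (D/2) - max (x - t) (-(D/2)) :=
      ((continuous_id.add continuous_const).min continuous_const).sub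
        ((continuous_id.sub continuous_const).max continuous_const)
    rw [← ofReal_integral_eq_lintegral_ofReal (hcont.integrableOn_Icc)
      (((ae_restrict_iff' measurableSet_Icc).mpr (ae_of_all _ fun x hx => by
        have h1 : x ≤ min (x + t) (D/2) := le_min (by linarith) hx.2
        have h2 : max (x - t) (-(D/2)) ≤ x := max_le (by linarith) hx.1
        simp only [Pi.zero_apply]
        linarith)))]
    rw [MeasureTheory.integral_Icc_eq_integral_Ioc,
      ← intervalIntegral.integral_of_le (by linarith : -(D/2) ≤ D/2),
      int_minmax D t hD ht0 ht2]
  rw [hg]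
  ring

lemma prod3_slice (D : ℝ) (hD : 0 < D) (y1 : ℝ) (hy1 : |y1| ≤ D/2) :
    (unif D).prod ((unif D).prod (unif D))
      {q : ℝ × ℝ × ℝ | (q.2.1 - q.2.2)^2 + q.1^2 ≤ y1^2}
      = ((ENNReal.ofReal D)⁻¹)^3 *
        ENNReal.ofReal (Real.pi * D * y1^2 - 4/3 * |y1|^3) := by
  set c : ℝ≥0∞ := (ENNReal.ofReal D)⁻¹ with hc
  have hofD0 : ENNReal.ofReal D ≠ 0 := by
    simp only [ne_eq, ENNReal.ofReal_eq_zero, not_le]; linarith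
  have hc_ne_top : c ≠ ⊤ := ENNReal.inv_ne_top.mpr hofD0
  have hc2_ne_top : c^2 ≠ ⊤ := ENNReal.pow_ne_top hc_ne_top
  have hSm : MeasurableSet {q : ℝ × ℝ × ℝ | (q.2.1 - q.2.2)^2 + q.1^2 ≤ y1^2} :=
    measurableSet_le (by fun_prop) (by fun_prop)
  rw [Measure.prod_apply hSm]
  have hpre : ∀ z : ℝ, (Prod.mk z ⁻¹' {q : ℝ × ℝ × ℝ | (q.2.1 - q.2.2)^2 + q.1^2 ≤ y1^2})
      = {q : ℝ × ℝ | (q.1 - q.2)^2 + z^2 ≤ y1^2} := fun _ => rfl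
  simp_rw [hpre]
  rw [unif_lintegral]
  have hcongr : ∫⁻ y2 in Icc (-(D/2)) (D/2),
        (unif D).prod (unif D) {q : ℝ × ℝ | (q.1 - q.2)^2 + y2^2 ≤ y1^2}
      = ∫⁻ y2 in Icc (-(D/2)) (D/2),
          c^2 * ENNReal.ofReal (2*D*Real.sqrt (y1^2-y2^2) - Real.sqrt (y1^2-y2^2)^2) := by
    apply setLIntegral_congr_fun measurableSet_Icc
    exact fun y2 _ => prod2_slice D hD y1 y2 hy1
  rw [hcongr, lintegral_const_mul' _ _ hc2_ne_top]
  have hg : ∫⁻ y2 in Icc (-(D/2)) (D/2),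
      ENNReal.ofReal (2*D*Real.sqrt (y1^2-y2^2) - Real.sqrt (y1^2-y2^2)^2)
      = ENNReal.ofReal (Real.pi * D * y1^2 - 4/3 * |y1|^3) := by
    have hs : Continuous fun y2 : ℝ => Real.sqrt (y1^2 - y2^2) :=
      Real.continuous_sqrt.comp (continuous_const.sub (continuous_pow 2))
    have hcont : Continuous fun y2 : ℝ =>
        2*D*Real.sqrt (y1^2 - y2^2) - Real.sqrt (y1^2 - y2^2)^2 :=
      (continuous_const.mul hs).sub (hs.pow 2)
    rw [← ofReal_integral_eq_lintegral_ofReal (hcont.integrableOn_Icc)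
      (ae_of_all _ fun y2 => by
        have ht0 : 0 ≤ Real.sqrt (y1^2 - y2^2) := Real.sqrt_nonneg _
        have ht2 : Real.sqrt (y1^2 - y2^2) ≤ D/2 := sqrt_le_half D y1 y2 hy1
        simp only [Pi.zero_apply]
        nlinarith)]
    rw [MeasureTheory.integral_Icc_eq_integral_Ioc,
      ← intervalIntegral.integral_of_le (by linarith : -(D/2) ≤ D/2),
      int_mid D y1 hD hy1]
  rw [hg]
  ring

/-- With x₁, x₂, y₁, y₂ independent uniform on [-D/2, D/2],
Pr((x₁-x₂)² + y₂² ≤ y₁²) = (2π-1)/24. -/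
theorem stmt_9 (D : ℝ) (hD : 0 < D) :
    ((unif D).prod ((unif D).prod ((unif D).prod (unif D))))
      {p : ℝ × ℝ × ℝ × ℝ |
        (p.1 - p.2.1) ^ 2 + p.2.2.2 ^ 2 ≤ p.2.2.1 ^ 2} =
      ENNReal.ofReal ((2 * Real.pi - 1) / 24) := by
  set μ := unif D with hμ
  set c : ℝ≥0∞ := (ENNReal.ofReal D)⁻¹ with hc
  have hofD0 : ENNReal.ofReal D ≠ 0 := by
    simp only [ne_eq, ENNReal.ofReal_eq_zero, not_le]; linarith
  have hofDt : ENNReal.ofReal D ≠ ⊤ := ENNReal.ofReal_ne_top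
  have hc_ne_top : c ≠ ⊤ := ENNReal.inv_ne_top.mpr hofD0
  have hc3_ne_top : c^3 ≠ ⊤ := ENNReal.pow_ne_top hc_ne_top
  have hS'm : MeasurableSet {q : ℝ × ℝ × ℝ × ℝ | (q.2.2.1 - q.2.2.2)^2 + q.2.1^2 ≤ q.1^2} :=
    measurableSet_le (by fun_prop) (by fun_prop)
  -- reorder coordinates
  have hT : MeasurePreserving
      (⇑MeasurableEquiv.prodAssoc ∘ Prod.swap ∘ ⇑MeasurableEquiv.prodAssoc.symm :
        ℝ × ℝ × ℝ × ℝ → ℝ × ℝ × ℝ × ℝ)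
      (μ.prod (μ.prod (μ.prod μ))) (μ.prod (μ.prod (μ.prod μ))) :=
    (measurePreserving_prodAssoc μ μ (μ.prod μ)).comp
      (Measure.measurePreserving_swap.comp
        ((measurePreserving_prodAssoc μ μ (μ.prod μ)).symm MeasurableEquiv.prodAssoc))
  have hpre : (⇑MeasurableEquiv.prodAssoc ∘ Prod.swap ∘ ⇑MeasurableEquiv.prodAssoc.symm) ⁻¹'
      {q : ℝ × ℝ × ℝ × ℝ | (q.2.2.1 - q.2.2.2)^2 + q.2.1^2 ≤ q.1^2}
      = {p : ℝ × ℝ × ℝ × ℝ | (p.1 - p.2.1) ^ 2 + p.2.2.2 ^ 2 ≤ p.2.2.1 ^ 2} := by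
    ext ⟨a, b, e, f⟩
    rfl
  rw [← hpre, hT.measure_preimage hS'm.nullMeasurableSet]
  -- unfold the outer integral
  rw [Measure.prod_apply hS'm]
  have hpre2 : ∀ y1 : ℝ, (Prod.mk y1 ⁻¹'
      {q : ℝ × ℝ × ℝ × ℝ | (q.2.2.1 - q.2.2.2)^2 + q.2.1^2 ≤ q.1^2})
      = {q : ℝ × ℝ × ℝ | (q.2.1 - q.2.2)^2 + q.1^2 ≤ y1^2} := fun _ => rfl
  simp_rw [hpre2]
  rw [hμ, unif_lintegral]
  have hcongr : ∫⁻ y1 in Icc (-(D/2)) (D/2),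
        (unif D).prod ((unif D).prod (unif D))
          {q : ℝ × ℝ × ℝ | (q.2.1 - q.2.2)^2 + q.1^2 ≤ y1^2}
      = ∫⁻ y1 in Icc (-(D/2)) (D/2),
          c^3 * ENNReal.ofReal (Real.pi * D * y1^2 - 4/3 * |y1|^3) := by
    apply setLIntegral_congr_fun measurableSet_Icc
    exact fun y1 hy1 => prod3_slice D hD y1 (abs_le.mpr ⟨hy1.1, hy1.2⟩)
  rw [hcongr, lintegral_const_mul' _ _ hc3_ne_top]
  have hg : ∫⁻ y1 in Icc (-(D/2)) (D/2),
      ENNReal.ofReal (Real.pi * D * y1^2 - 4/3 * |y1|^3)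
      = ENNReal.ofReal (D^4 * ((2*Real.pi - 1)/24)) := by
    have hcont : Continuous fun y : ℝ => Real.pi * D * y^2 - 4/3 * |y|^3 :=
      (continuous_const.mul (continuous_pow 2)).sub
        (continuous_const.mul ((continuous_abs).pow 3))
    rw [← ofReal_integral_eq_lintegral_ofReal (hcont.integrableOn_Icc)
      ((ae_restrict_iff' measurableSet_Icc).mpr (ae_of_all _ fun y hy => by
        have h1 : |y| ≤ D/2 := abs_le.mpr ⟨hy.1, hy.2⟩
        have h2 : (0:ℝ) ≤ |y| := abs_nonneg y
        have h3 : Real.pi ≥ 3 := Real.pi_gt_three.le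
        simp only [Pi.zero_apply]
        have key : 4/3 * |y|^3 ≤ 2/3 * D * y^2 := by
          have h4 : |y|^3 = |y| * |y|^2 := by ring
          rw [h4, sq_abs]
          nlinarith [sq_nonneg y]
        nlinarith [mul_nonneg hD.le (sq_nonneg y)]))]
    rw [MeasureTheory.integral_Icc_eq_integral_Ioc,
      ← intervalIntegral.integral_of_le (by linarith : -(D/2) ≤ D/2),
      int_out D hD, mul_div_assoc]
  rw [hg, ENNReal.ofReal_mul (by positivity), ENNReal.ofReal_pow hD.le]
  have final : ∀ X : ℝ≥0∞,
      (ENNReal.ofReal D)⁻¹ * (c^3 * (ENNReal.ofReal D ^ 4 * X)) = X := by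
    intro X
    rw [hc]
    have h4 : (ENNReal.ofReal D)⁻¹ * ((ENNReal.ofReal D)⁻¹^3 * (ENNReal.ofReal D ^ 4 * X))
        = ((ENNReal.ofReal D)⁻¹ * ENNReal.ofReal D)^4 * X := by ring
    rw [h4, ENNReal.inv_mul_cancel hofD0 hofDt, one_pow, one_mul]
  exact final _
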